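/- Let S/R be a separable ring extension with separability element x = Σ_j s_j ⊗ t_j ∈ S ⊗_R S, and let M be a left S-module. If M is projective as a left R-module, then M is projective as a left S-module. -/
import Mathlib


universe u

/-- `(a, b)` encodes a separability element `Σᵢ aᵢ ⊗ bᵢ ∈ S ⊗_R S` for the extension `S/R`:
`Σᵢ aᵢ bᵢ = 1` and `s • x = x • s` for all `s ∈ S`, the tensor equality being expressed via
all `R`-balanced biadditive maps into abelian groups. -/
def IsSepElt {S : Type*} [Ring S] (R : AddSubgroup S) {n : ℕ} (a b : Fin n → S) : Prop :=
  (∑ i, a i * b i) = 1 ∧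
    ∀ (M : Type u) [AddCommGroup M] (φ : S → S → M),
      (∀ x x' y : S, φ (x + x') y = φ x y + φ x' y) →
      (∀ x y y' : S, φ x (y + y') = φ x y + φ x y') →
      (∀ r ∈ R, ∀ x y : S, φ (x * r) y = φ x (r * y)) →
      ∀ s : S, (∑ i, φ (s * a i) (b i)) = ∑ i, φ (a i) (b i * s)

/-- The ring extension `S/R` is separable: there exists a separability element. -/
def IsSepExt {S : Type*} [Ring S] (R : AddSubgroup S) : Prop :=
  ∃ (n : ℕ) (a b : Fin n → S), IsSepElt.{u} R a b

/-- The separability identity holds for balanced biadditive maps into abelian groups of an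
arbitrary universe, not just universe `u`: we separate points with characters into `ℚ ⧸ ℤ`. -/
theorem IsSepElt.biadd {S : Type*} [Ring S] {R : AddSubgroup S} {n : ℕ} {a b : Fin n → S}
    (hsep : IsSepElt.{u} R a b)
    (A : Type*) [AddCommGroup A] (φ : S → S → A)
    (h1 : ∀ x x' y : S, φ (x + x') y = φ x y + φ x' y)
    (h2 : ∀ x y y' : S, φ x (y + y') = φ x y + φ x y')
    (h3 : ∀ r ∈ R, ∀ x y : S, φ (x * r) y = φ x (r * y))
    (s : S) : (∑ i, φ (s * a i) (b i)) = ∑ i, φ (a i) (b i * s) := by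
  rw [← sub_eq_zero, ← Finset.sum_sub_distrib]
  apply CharacterModule.eq_zero_of_character_apply
  intro c
  have key := hsep.2 (ULift.{u} (AddCircle (1 : ℚ)))
    (fun x y => AddEquiv.ulift.symm (c (φ x y)))
    (fun x x' y => by beta_reduce; rw [h1, map_add, map_add])
    (fun x y y' => by beta_reduce; rw [h2, map_add, map_add])
    (fun r hr x y => by beta_reduce; rw [h3 r hr]) s
  have key' := congrArg (⇑(AddEquiv.ulift : ULift.{u} (AddCircle (1 : ℚ)) ≃+ _)) key
  rw [map_sum, map_sum] at key'
  simp only [AddEquiv.apply_symm_apply] at key'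
  simp only [map_sum, map_sub]
  rw [Finset.sum_sub_distrib, key', sub_self]

/-- If `S/R` is a separable ring extension with separability element `Σⱼ sⱼ ⊗ tⱼ`, and
`M` is a left `S`-module which is projective as a left `R`-module (by restriction of
scalars), then `M` is projective as a left `S`-module. -/
theorem projective_of_separable_of_restriction_projective
    {S : Type*} [Ring S] (R : Subring S) {n : ℕ} (a b : Fin n → S)
    (hsep : IsSepElt.{u} R.toAddSubgroup a b)
    (M : Type*) [AddCommGroup M] [Module S M]
    (hproj : Module.Projective R M) :
    Module.Projective S M := by
  classical
  let π : (M →₀ S) →ₗ[S] M := Finsupp.linearCombination S id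
  have hπ : Function.Surjective π := fun m => ⟨Finsupp.single m 1, by simp [π]⟩
  -- `π` as an `R`-linear map
  let πR : (M →₀ S) →ₗ[R] M :=
    { toFun := π
      map_add' := π.map_add
      map_smul' := fun r x => π.map_smul (r : S) x }
  obtain ⟨h, hh⟩ := Module.projective_lifting_property πR (LinearMap.id : M →ₗ[R] M) hπ
  have hh' : ∀ z : M, π (h z) = z := fun z => congrArg (fun g => g z) hh
  -- the `S`-linear section of `π`
  let f : M →ₗ[S] (M →₀ S) :=
    { toFun := fun m => ∑ i, a i • h (b i • m)
      map_add' := fun m m' => by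
        simp [smul_add, map_add, Finset.sum_add_distrib]
      map_smul' := fun s m => by
        simp only [RingHom.id_apply]
        have key := hsep.biadd (M →₀ S) (fun x y => x • h (y • m))
          (fun x x' y => by
            show (x + x') • h (y • m) = x • h (y • m) + x' • h (y • m)
            rw [add_smul])
          (fun x y y' => by
            show x • h ((y + y') • m) = x • h (y • m) + x • h (y' • m)
            rw [add_smul, map_add, smul_add])
          (fun r hr x y => by
            show (x * r) • h (y • m) = x • h ((r * y) • m)
            have e1 : ((r * y) • m : M) = (⟨r, hr⟩ : R) • (y • m) := mul_smul r y m
            rw [e1, h.map_smul]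
            exact mul_smul x r _) s
        calc (∑ i, a i • h (b i • s • m)) = ∑ i, a i • h ((b i * s) • m) := by
              simp_rw [mul_smul]
          _ = ∑ i, (s * a i) • h (b i • m) := key.symm
          _ = s • ∑ i, a i • h (b i • m) := by
              rw [Finset.smul_sum]; simp_rw [mul_smul] }
  have Hsplit : π.comp f = LinearMap.id := by
    ext m
    show π (∑ i, a i • h (b i • m)) = m
    rw [map_sum]
    simp_rw [map_smul, hh', ← mul_smul, ← Finset.sum_smul, hsep.1, one_smul]
  exact Module.Projective.of_split f π Hsplit
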